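/- (Implicit Duality Theorem) Let S, P, Q be pairwise disjoint finite sets and let V_SP ⊆ ℂ^{S⊎P} and V_PQ ⊆ ℂ^{P⊎Q} be ℂ-linear subspaces. Then (V_SP ↔ V_PQ)^⊥ = V_SP^⊥ ⇌ V_PQ^⊥, where the orthogonal complement on the left is taken in ℂ^{S⊎Q}, and on the right in ℂ^{S⊎P} and ℂ^{P⊎Q} respectively. -/

import Mathlib

/-!
STATEMENT 4 (Implicit Duality Theorem): Let S, P, Q be pairwise disjoint finite sets and
let V_SP ⊆ ℂ^{S⊎P} and V_PQ ⊆ ℂ^{P⊎Q} be ℂ-linear subspaces. Then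
(V_SP ↔ V_PQ)^⊥ = V_SP^⊥ ⇌ V_PQ^⊥, the orthogonal complements being taken with
respect to the Hermitian inner products on ℂ^{S⊎Q}, ℂ^{S⊎P}, ℂ^{P⊎Q}.
-/

/-- Hermitian inner product on `ℂ^X`: `⟨f,g⟩ = Σ_e f e * conj (g e)`. -/
noncomputable def hinner {X : Type*} [Fintype X] (f g : X → ℂ) : ℂ :=
  ∑ e, f e * (starRingEnd ℂ) (g e)

/-- Orthogonal complement (as a set) in `ℂ^{X⊎Y} = ℂ^X × ℂ^Y`. -/
def pperp {X Y : Type*} [Fintype X] [Fintype Y] (K : Set ((X → ℂ) × (Y → ℂ))) :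
    Set ((X → ℂ) × (Y → ℂ)) :=
  {g | ∀ f ∈ K, hinner f.1 g.1 + hinner f.2 g.2 = 0}

/-- Matched composition `K_SP ↔ K_PQ`. -/
def matched {S P Q : Type*} (KSP : Set ((S → ℂ) × (P → ℂ)))
    (KPQ : Set ((P → ℂ) × (Q → ℂ))) : Set ((S → ℂ) × (Q → ℂ)) :=
  {fg | ∃ h : P → ℂ, (fg.1, h) ∈ KSP ∧ (h, fg.2) ∈ KPQ}

/-- Skewed composition `K_SP ⇌ K_PQ`. -/
def skewed {S P Q : Type*} (KSP : Set ((S → ℂ) × (P → ℂ)))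
    (KPQ : Set ((P → ℂ) × (Q → ℂ))) : Set ((S → ℂ) × (Q → ℂ)) :=
  {fg | ∃ h : P → ℂ, (fg.1, h) ∈ KSP ∧ (-h, fg.2) ∈ KPQ}

lemma hinner_conj {X : Type*} [Fintype X] (f g : X → ℂ) :
    (starRingEnd ℂ) (hinner f g) = hinner g f := by
  simp [hinner, map_sum, mul_comm]

lemma hinner_zero_left {X : Type*} [Fintype X] (g : X → ℂ) : hinner 0 g = 0 := by
  simp [hinner]

lemma hinner_zero_right {X : Type*} [Fintype X] (f : X → ℂ) : hinner f 0 = 0 := by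
  simp [hinner]

lemma hinner_neg_right {X : Type*} [Fintype X] (f g : X → ℂ) :
    hinner f (-g) = -hinner f g := by
  simp [hinner, Finset.sum_neg_distrib]

def packL (S P Q : Type*) [Fintype S] [Fintype P] [Fintype Q] :
    (((S → ℂ) × (P → ℂ)) × ((P → ℂ) × (Q → ℂ))) →ₗ[ℂ]
      EuclideanSpace ℂ ((S ⊕ P) ⊕ (P ⊕ Q)) where
  toFun v := WithLp.toLp 2 (Sum.elim (Sum.elim v.1.1 v.1.2) (Sum.elim v.2.1 v.2.2))
  map_add' x y := by apply PiLp.ext; intro i; rcases i with (s|p)|(p|q) <;> rfl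
  map_smul' c x := by apply PiLp.ext; intro i; rcases i with (s|p)|(p|q) <;> rfl

def diffL (S P Q : Type*) [Fintype S] [Fintype P] [Fintype Q] :
    EuclideanSpace ℂ ((S ⊕ P) ⊕ (P ⊕ Q)) →ₗ[ℂ] (P → ℂ) where
  toFun x := fun p => x (Sum.inl (Sum.inr p)) - x (Sum.inr (Sum.inl p))
  map_add' x y := by funext p; show (x + y) _ - (x + y) _ = _; simp [PiLp.add_apply]; ring
  map_smul' c x := by funext p; show (c • x) _ - (c • x) _ = _; simp [PiLp.smul_apply]; ring

lemma inner_pack {S P Q : Type*} [Fintype S] [Fintype P] [Fintype Q]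
    (f : S → ℂ) (k : P → ℂ) (k' : P → ℂ) (g : Q → ℂ)
    (a : S → ℂ) (h : P → ℂ) (h' : P → ℂ) (b : Q → ℂ) :
    (inner ℂ (packL S P Q ((f, k), (k', g))) (packL S P Q ((a, h), (h', b))) : ℂ)
      = hinner a f + hinner h k + hinner h' k' + hinner b g := by
  rw [PiLp.inner_apply]
  simp only [Fintype.sum_sum_type]
  simp [packL, hinner, RCLike.inner_apply, mul_comm, add_assoc]

theorem statement4 (S P Q : Type*) [Fintype S] [Fintype P] [Fintype Q]
    (VSP : Submodule ℂ ((S → ℂ) × (P → ℂ)))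
    (VPQ : Submodule ℂ ((P → ℂ) × (Q → ℂ))) :
    pperp (matched (VSP : Set ((S → ℂ) × (P → ℂ))) (VPQ : Set ((P → ℂ) × (Q → ℂ))))
      = skewed (pperp (VSP : Set ((S → ℂ) × (P → ℂ))))
          (pperp (VPQ : Set ((P → ℂ) × (Q → ℂ)))) := by
  classical
  set U := (VSP.prod VPQ).map (packL S P Q) with hUdef
  set Δ := LinearMap.ker (diffL S P Q) with hDdef
  have horth : (U ⊓ Δ)ᗮ = Uᗮ ⊔ Δᗮ := by
    have h1 : (Uᗮ ⊔ Δᗮ)ᗮ = U ⊓ Δ := by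
      rw [← Submodule.inf_orthogonal, U.orthogonal_orthogonal, Δ.orthogonal_orthogonal]
    rw [← h1, Submodule.orthogonal_orthogonal]
  ext ⟨a, b⟩
  constructor
  · intro hab
    have hx : packL S P Q ((a, 0), (0, b)) ∈ (U ⊓ Δ)ᗮ := by
      rw [Submodule.mem_orthogonal]
      rintro u ⟨hu1, hu2⟩
      obtain ⟨⟨⟨f, k⟩, ⟨k', g⟩⟩, ⟨hf, hg⟩, rfl⟩ := hu1
      have hkk : k' = k := by
        funext p
        have h0 := congrFun (LinearMap.mem_ker.mp hu2) p
        have h0' : k p - k' p = 0 := h0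
        exact (sub_eq_zero.mp h0').symm
      rw [inner_pack, hinner_zero_left, hinner_zero_left]
      have hm := hab (f, g) ⟨k, hf, by rw [hkk] at hg; exact hg⟩
      have hm' := congrArg (starRingEnd ℂ) hm
      simp only [map_add, hinner_conj, map_zero] at hm'
      linear_combination hm'
    rw [horth] at hx
    obtain ⟨u, hu, w, hw, huw⟩ := Submodule.mem_sup.mp hx
    have ws : ∀ s, w (Sum.inl (Sum.inl s)) = 0 := by
      intro s
      have hy : (EuclideanSpace.single (Sum.inl (Sum.inl s) : (S ⊕ P) ⊕ (P ⊕ Q)) (1 : ℂ)) ∈ Δ := by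
        rw [LinearMap.mem_ker]
        funext p
        simp [diffL, EuclideanSpace.single_apply]
      have h0 := (Submodule.mem_orthogonal _ _).mp hw _ hy
      simpa [EuclideanSpace.inner_single_left] using h0
    have wq : ∀ q, w (Sum.inr (Sum.inr q)) = 0 := by
      intro q
      have hy : (EuclideanSpace.single (Sum.inr (Sum.inr q) : (S ⊕ P) ⊕ (P ⊕ Q)) (1 : ℂ)) ∈ Δ := by
        rw [LinearMap.mem_ker]
        funext p
        simp [diffL, EuclideanSpace.single_apply]
      have h0 := (Submodule.mem_orthogonal _ _).mp hw _ hy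
      simpa [EuclideanSpace.inner_single_left] using h0
    have wp : ∀ p, w (Sum.inl (Sum.inr p)) + w (Sum.inr (Sum.inl p)) = 0 := by
      intro p
      have hy : (EuclideanSpace.single (Sum.inl (Sum.inr p) : (S ⊕ P) ⊕ (P ⊕ Q)) (1 : ℂ)
          + EuclideanSpace.single (Sum.inr (Sum.inl p)) (1 : ℂ)) ∈ Δ := by
        rw [LinearMap.mem_ker]
        funext p'
        by_cases hpp : p' = p <;>
          simp [diffL, LinearMap.coe_mk, AddHom.coe_mk, PiLp.add_apply,
            EuclideanSpace.single_apply, hpp]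
      have h0 := (Submodule.mem_orthogonal _ _).mp hw _ hy
      rw [inner_add_left] at h0
      simpa [EuclideanSpace.inner_single_left] using h0
    set h : P → ℂ := fun p => u (Sum.inl (Sum.inr p)) with hhdef
    have hu_eq : u = packL S P Q ((a, h), (-h, b)) := by
      apply PiLp.ext; intro i
      have hc := congrArg (fun x => x.ofLp i) huw
      rcases i with (s | p) | (p | q)
      · show u _ = a s
        have h1 : u (Sum.inl (Sum.inl s)) + w (Sum.inl (Sum.inl s)) = a s := hc
        rw [ws s, add_zero] at h1
        exact h1
      · rfl
      · show u (Sum.inr (Sum.inl p)) = -(u (Sum.inl (Sum.inr p)))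
        have h1c := congrArg (fun x => x.ofLp (Sum.inl (Sum.inr p))) huw
        have h1 : u (Sum.inl (Sum.inr p)) + w (Sum.inl (Sum.inr p)) = 0 := h1c
        have h2 : u (Sum.inr (Sum.inl p)) + w (Sum.inr (Sum.inl p)) = 0 := hc
        linear_combination h1 + h2 - wp p
      · show u _ = b q
        have h1 : u (Sum.inr (Sum.inr q)) + w (Sum.inr (Sum.inr q)) = b q := hc
        rw [wq q, add_zero] at h1
        exact h1
    refine ⟨h, ?_, ?_⟩
    · rintro ⟨f, k⟩ hfk
      have hyU : packL S P Q ((f, k), (0, 0)) ∈ U :=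
        ⟨((f, k), (0, 0)), ⟨hfk, VPQ.zero_mem⟩, rfl⟩
      have h0 := (Submodule.mem_orthogonal _ _).mp hu _ hyU
      rw [hu_eq, inner_pack, hinner_zero_right, hinner_zero_right] at h0
      have h0' := congrArg (starRingEnd ℂ) h0
      simp only [map_add, hinner_conj, map_zero, add_zero] at h0'
      linear_combination h0'
    · rintro ⟨k, g⟩ hkg
      have hyU : packL S P Q ((0, 0), (k, g)) ∈ U :=
        ⟨((0, 0), (k, g)), ⟨VSP.zero_mem, hkg⟩, rfl⟩
      have h0 := (Submodule.mem_orthogonal _ _).mp hu _ hyU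
      rw [hu_eq, inner_pack, hinner_zero_right, hinner_zero_right] at h0
      have h0' := congrArg (starRingEnd ℂ) h0
      simp only [map_add, hinner_conj, map_zero, zero_add] at h0'
      linear_combination h0'
  · rintro ⟨h, hA, hB⟩ ⟨f, g⟩ ⟨k, hk1, hk2⟩
    have e1 := hA (f, k) hk1
    have e2 := hB (k, g) hk2
    rw [hinner_neg_right] at e2
    linear_combination e1 + e2
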